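/- Let Λ be a countable set, let a : Λ × Λ → ℝ satisfy a(i,j) ≥ 0 and, for each i, the family (a(i,j))_{j∈Λ} is summable. Let δ ≥ 0, let 0 < ε < 2, and set ε₁ := ε/(2 − ε) and ε₂ := ε e^{ε}/(2 + ε e^{ε}). Let h be a real-valued function on finite subsets of Λ such that for every finite A: 0 ≤ h(A ∪ {j}) − h(A) ≤ 1 for all j ∉ A, and 0 ≤ h(A) − h(A \ {i}) ≤ 1 for all i ∈ A. Define φ_ε(z) := ε^{-1}(e^{-εz} − 1 + εz). Then for every finite A ⊆ Λ: (1 + ε₁) Σ_{i∈A} Σ_{j∉A} a(i,j) φ_ε(h(A∪{j}) − h(A)) + (1 − ε₂) δ Σ_{i∈A} φ_ε(h(A\{i}) − h(A)) ≤ ε₁ Σ_{i∈A} Σ_{j∉A} a(i,j) (h(A∪{j}) − h(A)) + ε₂ δ Σ_{i∈A} (h(A) − h(A\{i})). -/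

import Mathlib

lemma quad_bound (x : ℝ) (hx : 0 ≤ x) : Real.exp (-x) ≤ 1 - x + x^2/2 := by
  have h1 : 1 + x + x^2/2 ≤ Real.exp x := by
    have := Real.sum_le_exp_of_nonneg hx 3
    simp [Finset.sum_range_succ] at this
    nlinarith [this]
  have h2 : Real.exp (-x) * Real.exp x = 1 := by
    rw [← Real.exp_add]; simp
  nlinarith [Real.exp_pos x, Real.exp_pos (-x), sq_nonneg (x-1), sq_nonneg (x*x)]

lemma cubic_bound (x : ℝ) (hx : 0 ≤ x) : 1 - x + x^2/2 - x^3/6 ≤ Real.exp (-x) := by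
  set f : ℝ → ℝ := fun y => Real.exp (-y) - 1 + y - y^2/2 + y^3/6 with hf
  have hd : ∀ y : ℝ, HasDerivAt f (-Real.exp (-y) + 1 - y + y^2/2) y := by
    intro y
    have h1 : HasDerivAt (fun y : ℝ => Real.exp (-y)) (-Real.exp (-y)) y := by
      exact (hasDerivAt_neg y).exp.congr_deriv (by ring)
    have h2 : HasDerivAt (fun y : ℝ => y^2/2) y y := by
      simpa using ((hasDerivAt_pow 2 y).div_const 2)
    have h3 : HasDerivAt (fun y : ℝ => y^3/6) (y^2/2) y := by
      have := (hasDerivAt_pow 3 y).div_const 6; exact this.congr_deriv (by norm_num; ring)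
    have := (((h1.sub_const 1).add (hasDerivAt_id y)).sub h2).add h3
    exact this.congr_deriv (by ring)
  have hmono : MonotoneOn f (Set.Ici (0:ℝ)) := by
    apply monotoneOn_of_deriv_nonneg (convex_Ici 0)
    · exact (Continuous.continuousOn (by fun_prop))
    · intro y hy
      exact (hd y).differentiableAt.differentiableWithinAt
    · intro y hy
      rw [(hd y).deriv]
      simp only [interior_Ici, Set.mem_Ioi] at hy
      nlinarith [quad_bound y hy.le]
  have h0 : f 0 = 0 := by simp [hf]
  have := hmono (Set.self_mem_Ici) (Set.mem_Ici.2 hx) hx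
  rw [h0] at this
  simp only [hf] at this
  linarith

lemma exp_convex_seg (c z : ℝ) (h0 : 0 ≤ z) (h1 : z ≤ 1) :
    Real.exp (z * c) ≤ 1 + z * (Real.exp c - 1) := by
  have := convexOn_exp.2 (Set.mem_univ (0:ℝ)) (Set.mem_univ c)
    (by linarith : (0:ℝ) ≤ 1 - z) h0 (by ring)
  simp only [smul_eq_mul, mul_zero, zero_add, Real.exp_zero, mul_one] at this
  linarith

lemma key1 (ε ε₁ : ℝ) (hε : 0 < ε) (hε2 : ε < 2) (hε₁ : ε₁ = ε / (2 - ε))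
    (z : ℝ) (h0 : 0 ≤ z) (h1 : z ≤ 1) :
    (1 + ε₁) * (ε⁻¹ * (Real.exp (-ε * z) - 1 + ε * z)) ≤ ε₁ * z := by
  have hD : (0:ℝ) < 2 - ε := by linarith
  have hc : Real.exp (-ε * z) ≤ 1 + z * (Real.exp (-ε) - 1) := by
    have := exp_convex_seg (-ε) z h0 h1
    rw [show z * -ε = -ε * z by ring] at this; exact this
  have hnn : 0 ≤ Real.exp (-ε) - 1 + ε := by
    nlinarith [Real.add_one_le_exp (-ε)]
  have expo1 : 2*(Real.exp (-ε) - 1 + ε) ≤ ε^2 := by nlinarith [quad_bound ε hε.le]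
  have step1 : Real.exp (-ε * z) - 1 + ε * z ≤ z * (Real.exp (-ε) - 1 + ε) := by nlinarith
  have hco : 0 ≤ (1 + ε₁) * ε⁻¹ := by rw [hε₁]; positivity
  have hcoef : (1 + ε₁) * (ε⁻¹ * (z * (Real.exp (-ε) - 1 + ε))) ≤ ε₁ * z := by
    set C := Real.exp (-ε) - 1 + ε with hC
    have h2 : (1 + ε₁) = 2/(2-ε) := by rw [hε₁]; field_simp; ring
    have h3 : 2*z*C*(2-ε) ≤ ε^2*z*(2-ε) := by
      nlinarith [mul_nonneg (mul_nonneg h0 (by linarith : 0 ≤ ε^2 - 2*C)) hD.le]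
    have ht : 0 ≤ ε⁻¹ := inv_nonneg.2 hε.le
    rw [h2, hε₁, div_mul_eq_mul_div, div_mul_eq_mul_div, div_le_div_iff₀ hD hD]
    calc 2*(ε⁻¹*(z*C))*(2-ε) = ε⁻¹ * (2*z*C*(2-ε)) := by ring
      _ ≤ ε⁻¹ * (ε^2*z*(2-ε)) := mul_le_mul_of_nonneg_left h3 ht
      _ = ε*z*(2-ε) := by field_simp
  calc (1 + ε₁) * (ε⁻¹ * (Real.exp (-ε * z) - 1 + ε * z))
      ≤ (1 + ε₁) * (ε⁻¹ * (z * (Real.exp (-ε) - 1 + ε))) := by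
        rw [← mul_assoc, ← mul_assoc]
        exact mul_le_mul_of_nonneg_left step1 hco
    _ ≤ ε₁ * z := hcoef

lemma key2 (ε ε₂ : ℝ) (hε : 0 < ε) (hε2 : ε < 2)
    (hε₂ : ε₂ = ε * Real.exp ε / (2 + ε * Real.exp ε))
    (w : ℝ) (h0 : 0 ≤ w) (h1 : w ≤ 1) :
    (1 - ε₂) * (ε⁻¹ * (Real.exp (-ε * (-w)) - 1 + ε * (-w))) ≤ ε₂ * w := by
  set E := Real.exp ε with hE
  have hEpos : 0 < E := Real.exp_pos ε
  have hD : (0:ℝ) < 2 + ε * E := by positivity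
  have hc : Real.exp (-ε * -w) ≤ 1 + w * (E - 1) := by
    have := exp_convex_seg ε w h0 h1
    rw [show -ε * -w = w * ε by ring]; exact this
  have hnn : 0 ≤ E - 1 - ε := by nlinarith [Real.add_one_le_exp ε]
  have hEE : Real.exp (-ε) * E = 1 := by rw [hE, ← Real.exp_add]; simp
  have expo2 : 2 * (E - 1 - ε) ≤ ε^2 * E := by
    have hc3 : 1 - ε + ε^2/2 - ε^3/6 ≤ Real.exp (-ε) := cubic_bound ε hε.le
    have h5 : 2 - ε^2 ≤ (2 + 2*ε) * Real.exp (-ε) := by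
      nlinarith [mul_nonneg (pow_nonneg hε.le 3) (by linarith : (0:ℝ) ≤ 2 - ε)]
    have h4 : (2 - ε^2) * E ≤ ((2 + 2*ε) * Real.exp (-ε)) * E :=
      mul_le_mul_of_nonneg_right h5 hEpos.le
    have : ((2 + 2*ε) * Real.exp (-ε)) * E = 2 + 2*ε := by
      rw [mul_assoc, hEE]; ring
    nlinarith [h4]
  have step1 : Real.exp (-ε * -w) - 1 + ε * (-w) ≤ w * (E - 1 - ε) := by nlinarith
  have hco : 0 ≤ 1 - ε₂ := by
    rw [hε₂]
    have : ε * E / (2 + ε * E) ≤ 1 := by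
      rw [div_le_one hD]; linarith
    linarith
  have hcoef : (1 - ε₂) * (ε⁻¹ * (w * (E - 1 - ε))) ≤ ε₂ * w := by
    set C := E - 1 - ε with hC
    have h2 : (1 - ε₂) = 2/(2 + ε*E) := by rw [hε₂]; field_simp; ring
    have h3 : 2*w*C*(2 + ε*E) ≤ ε^2*E*w*(2 + ε*E) := by
      nlinarith [mul_nonneg (mul_nonneg h0 (by linarith : 0 ≤ ε^2*E - 2*C)) hD.le]
    have ht : 0 ≤ ε⁻¹ := inv_nonneg.2 hε.le
    rw [h2, hε₂, div_mul_eq_mul_div, div_mul_eq_mul_div, div_le_div_iff₀ hD hD]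
    calc 2*(ε⁻¹*(w*C))*(2 + ε*E) = ε⁻¹ * (2*w*C*(2 + ε*E)) := by ring
      _ ≤ ε⁻¹ * (ε^2*E*w*(2 + ε*E)) := mul_le_mul_of_nonneg_left h3 ht
      _ = ε*E*w*(2 + ε*E) := by field_simp
  calc (1 - ε₂) * (ε⁻¹ * (Real.exp (-ε * -w) - 1 + ε * (-w)))
      ≤ (1 - ε₂) * (ε⁻¹ * (w * (E - 1 - ε))) := by
        rw [← mul_assoc, ← mul_assoc]
        exact mul_le_mul_of_nonneg_left step1 (by positivity)
    _ ≤ ε₂ * w := hcoef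

/-- The core estimate in the proof of sharpness of the phase transition: for a function `h`
on finite subsets of `Λ` with increments in `[0,1]`, summable nonnegative infection rates `a`,
recovery rate `δ ≥ 0`, `0 < ε < 2`, `ε₁ = ε/(2-ε)`, `ε₂ = ε e^ε/(2 + ε e^ε)` and
`φ_ε(z) = ε⁻¹(e^{-εz} - 1 + εz)`, the `φ_ε`-transform of the perturbed generator is dominated
by the difference of the perturbed and unperturbed generators. -/
theorem drift_condition_estimate {Λ : Type*} [Countable Λ] [DecidableEq Λ]
    (a : Λ → Λ → ℝ) (ha : ∀ i j : Λ, 0 ≤ a i j) (hsum : ∀ i : Λ, Summable (a i))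
    (δ : ℝ) (hδ : 0 ≤ δ)
    (ε : ℝ) (hε : 0 < ε) (hε2 : ε < 2)
    (ε₁ ε₂ : ℝ) (hε₁ : ε₁ = ε / (2 - ε))
    (hε₂ : ε₂ = ε * Real.exp ε / (2 + ε * Real.exp ε))
    (h : Finset Λ → ℝ)
    (hinc : ∀ (A : Finset Λ) (j : Λ), j ∉ A →
      0 ≤ h (insert j A) - h A ∧ h (insert j A) - h A ≤ 1)
    (hdec : ∀ (A : Finset Λ) (i : Λ), i ∈ A →
      0 ≤ h A - h (A.erase i) ∧ h A - h (A.erase i) ≤ 1)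
    (φ : ℝ → ℝ) (hφ : ∀ z : ℝ, φ z = ε⁻¹ * (Real.exp (-ε * z) - 1 + ε * z))
    (A : Finset Λ) :
    (1 + ε₁) * ∑ i ∈ A, ∑' j : {j : Λ // j ∉ A}, a i j.1 * φ (h (insert j.1 A) - h A)
        + (1 - ε₂) * δ * ∑ i ∈ A, φ (h (A.erase i) - h A)
      ≤ ε₁ * ∑ i ∈ A, ∑' j : {j : Λ // j ∉ A}, a i j.1 * (h (insert j.1 A) - h A)
        + ε₂ * δ * ∑ i ∈ A, (h A - h (A.erase i)) := by
  have hε₁nn : 0 ≤ ε₁ := by rw [hε₁]; apply div_nonneg hε.le; linarith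
  -- basic φ bounds
  have phi_nonneg : ∀ z : ℝ, 0 ≤ φ z := by
    intro z; rw [hφ]
    apply mul_nonneg (inv_nonneg.2 hε.le)
    nlinarith [Real.add_one_le_exp (-ε * z)]
  have phi_le : ∀ z : ℝ, 0 ≤ z → φ z ≤ z := by
    intro z hz; rw [hφ]
    have h1 : Real.exp (-ε * z) ≤ 1 := Real.exp_le_one_iff.2 (by nlinarith)
    calc ε⁻¹ * (Real.exp (-ε * z) - 1 + ε * z) ≤ ε⁻¹ * (ε * z) := by
          apply mul_le_mul_of_nonneg_left (by linarith) (inv_nonneg.2 hε.le)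
      _ = z := by field_simp
  -- increments
  set Z : {j : Λ // j ∉ A} → ℝ := fun j => h (insert j.1 A) - h A with hZdef
  have hZ : ∀ j : {j : Λ // j ∉ A}, 0 ≤ Z j ∧ Z j ≤ 1 := fun j => hinc A j.1 j.2
  -- summability
  have hsub : ∀ i : Λ, Summable (fun j : {j : Λ // j ∉ A} => a i j.1) := by
    intro i; exact (hsum i).subtype _
  have hS1 : ∀ i : Λ, Summable (fun j : {j : Λ // j ∉ A} => a i j.1 * φ (Z j)) := by
    intro i
    apply Summable.of_nonneg_of_le
      (fun j => mul_nonneg (ha i j.1) (phi_nonneg (Z j)))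
      (fun j => ?_) (hsub i)
    calc a i j.1 * φ (Z j) ≤ a i j.1 * 1 :=
          mul_le_mul_of_nonneg_left (le_trans (phi_le _ (hZ j).1) (hZ j).2) (ha i j.1)
      _ = a i j.1 := mul_one _
  have hS2 : ∀ i : Λ, Summable (fun j : {j : Λ // j ∉ A} => a i j.1 * Z j) := by
    intro i
    apply Summable.of_nonneg_of_le
      (fun j => mul_nonneg (ha i j.1) (hZ j).1)
      (fun j => ?_) (hsub i)
    calc a i j.1 * Z j ≤ a i j.1 * 1 := mul_le_mul_of_nonneg_left (hZ j).2 (ha i j.1)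
      _ = a i j.1 := mul_one _
  -- infection part
  have hinf : ∀ i ∈ A,
      (1 + ε₁) * ∑' j : {j : Λ // j ∉ A}, a i j.1 * φ (Z j)
        ≤ ε₁ * ∑' j : {j : Λ // j ∉ A}, a i j.1 * Z j := by
    intro i _
    rw [← tsum_mul_left, ← tsum_mul_left]
    apply Summable.tsum_le_tsum _ ((hS1 i).mul_left _) ((hS2 i).mul_left _)
    intro j
    have hk : (1 + ε₁) * φ (Z j) ≤ ε₁ * Z j := by
      rw [hφ]; exact key1 ε ε₁ hε hε2 hε₁ (Z j) (hZ j).1 (hZ j).2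
    calc (1 + ε₁) * (a i j.1 * φ (Z j)) = a i j.1 * ((1 + ε₁) * φ (Z j)) := by ring
      _ ≤ a i j.1 * (ε₁ * Z j) := mul_le_mul_of_nonneg_left hk (ha i j.1)
      _ = ε₁ * (a i j.1 * Z j) := by ring
  have h1 : (1 + ε₁) * ∑ i ∈ A, ∑' j : {j : Λ // j ∉ A}, a i j.1 * φ (Z j)
      ≤ ε₁ * ∑ i ∈ A, ∑' j : {j : Λ // j ∉ A}, a i j.1 * Z j := by
    rw [Finset.mul_sum, Finset.mul_sum]
    exact Finset.sum_le_sum hinf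
  -- recovery part
  have hrec : ∀ i ∈ A, (1 - ε₂) * φ (h (A.erase i) - h A) ≤ ε₂ * (h A - h (A.erase i)) := by
    intro i hi
    obtain ⟨hw0, hw1⟩ := hdec A i hi
    rw [show h (A.erase i) - h A = -(h A - h (A.erase i)) by ring, hφ]
    exact key2 ε ε₂ hε hε2 hε₂ _ hw0 hw1
  have h2 : (1 - ε₂) * δ * ∑ i ∈ A, φ (h (A.erase i) - h A)
      ≤ ε₂ * δ * ∑ i ∈ A, (h A - h (A.erase i)) := by
    have hs : ∑ i ∈ A, (1 - ε₂) * φ (h (A.erase i) - h A)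
        ≤ ∑ i ∈ A, ε₂ * (h A - h (A.erase i)) := Finset.sum_le_sum hrec
    rw [← Finset.mul_sum, ← Finset.mul_sum] at hs
    calc (1 - ε₂) * δ * ∑ i ∈ A, φ (h (A.erase i) - h A)
        = δ * ((1 - ε₂) * ∑ i ∈ A, φ (h (A.erase i) - h A)) := by ring
      _ ≤ δ * (ε₂ * ∑ i ∈ A, (h A - h (A.erase i))) := mul_le_mul_of_nonneg_left hs hδ
      _ = ε₂ * δ * ∑ i ∈ A, (h A - h (A.erase i)) := by ring
  linarith
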